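/- If every hyperface of Q^n has at least m cusps where m ≥ 2(n-1), then c(Q^n) ≥ 3m - 2n + 1: as a purely arithmetic consequence, for natural numbers n, m with 8 ≤ n ≤ 12 and m ≥ 2*(n-1), and real numbers c ≥ m satisfying c ≥ 2*m - 2 + (2*n-3)/(m-1) + ((m-2*(n-1))/(m-1))*c', with c' ≥ m, it follows that c ≥ 3*m - 2*n + 1. -/

import Mathlib

theorem stmt_17 (n m : ℕ) (hn1 : 8 ≤ n) (hn2 : n ≤ 12) (hm : 2 * (n - 1) ≤ m)
    (c c' : ℝ) (hc' : (m : ℝ) ≤ c')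
    (hc : c ≥ 2 * (m : ℝ) - 2 + (2 * (n : ℝ) - 3) / ((m : ℝ) - 1) +
      (((m : ℝ) - 2 * ((n : ℝ) - 1)) / ((m : ℝ) - 1)) * c') :
    c ≥ 3 * (m : ℝ) - 2 * (n : ℝ) + 1 := by
  have h1 : (1:ℕ) ≤ n := by omega
  have hm' : 2 * ((n:ℝ) - 1) ≤ (m:ℝ) := by
    have h2 : ((2*(n-1):ℕ):ℝ) ≤ (m:ℝ) := by exact_mod_cast hm
    push_cast [Nat.cast_sub h1] at h2
    linarith
  have hn' : (8:ℝ) ≤ (n:ℝ) := by exact_mod_cast hn1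
  have hpos : (m:ℝ) - 1 > 0 := by linarith
  have hne : (m:ℝ) - 1 ≠ 0 := ne_of_gt hpos
  rw [ge_iff_le, ← sub_nonneg] at hc
  field_simp at hc
  replace hc : (0 ≤ c * ((m:ℝ) - 1) - (2 * ((m:ℝ) - 1) ^ 2 + (2 * (n:ℝ) - 3) + ((m:ℝ) - 2 * ((n:ℝ) - 1)) * c') ∧ 0 ≤ (m:ℝ) - 1) ∨ (c * ((m:ℝ) - 1) - (2 * ((m:ℝ) - 1) ^ 2 + (2 * (n:ℝ) - 3) + ((m:ℝ) - 2 * ((n:ℝ) - 1)) * c') ≤ 0 ∧ (m:ℝ) - 1 ≤ 0) := Or.inl ⟨by linarith, by linarith⟩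
  rcases hc with ⟨h, _⟩ | ⟨_, h⟩
  · nlinarith [mul_nonneg (by linarith : (0:ℝ) ≤ (m:ℝ) - 2*((n:ℝ)-1)) (by linarith : (0:ℝ) ≤ c' - m)]
  · linarith
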